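/- If two square integer matrices M and M′ are Strongly S-equivalent, then there exists a matrix N that is obtained from M by a sequence of enlargements and congruences, and is also obtained from M′ by a sequence of enlargements and congruences. (I.e., M and M′ have a common 'stabilization'.) -/

import Mathlib

open Matrix

/-- Enlargement of the first type: `((V, yᵀ, 0), (x, z, 1), (0, 0, 0))`. -/
def enlargeA (n : ℕ) (V : Matrix (Fin n) (Fin n) ℤ) (x y : Fin n → ℤ) (z : ℤ) :
    Matrix (Fin (n + 2)) (Fin (n + 2)) ℤ :=
  Matrix.of fun i j =>
    if hi : (i : ℕ) < n then
      if hj : (j : ℕ) < n then V ⟨i, hi⟩ ⟨j, hj⟩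
      else if (j : ℕ) = n then y ⟨i, hi⟩ else 0
    else if (i : ℕ) = n then
      if hj : (j : ℕ) < n then x ⟨j, hj⟩ else if (j : ℕ) = n then z else 1
    else 0

/-- Enlargement of the second type: `((V, yᵀ, 0), (x, z, 0), (0, 1, 0))`. -/
def enlargeB (n : ℕ) (V : Matrix (Fin n) (Fin n) ℤ) (x y : Fin n → ℤ) (z : ℤ) :
    Matrix (Fin (n + 2)) (Fin (n + 2)) ℤ :=
  Matrix.of fun i j =>
    if hi : (i : ℕ) < n then
      if hj : (j : ℕ) < n then V ⟨i, hi⟩ ⟨j, hj⟩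
      else if (j : ℕ) = n then y ⟨i, hi⟩ else 0
    else if (i : ℕ) = n then
      if hj : (j : ℕ) < n then x ⟨j, hj⟩ else if (j : ℕ) = n then z else 0
    else if (j : ℕ) = n then 1 else 0

/- ### auxiliary development -/


/-- the lower-right 2×2 block of an enlargement of type `b`. -/
def genl (b : Bool) (z : ℤ) : Matrix (Fin 2) (Fin 2) ℤ :=
  if b then !![z, 1; 0, 0] else !![z, 0; 1, 0]

def colY {n : ℕ} (y : Fin n → ℤ) : Matrix (Fin n) (Fin 2) ℤ :=
  Matrix.of fun i j => if j = 0 then y i else 0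

def rowX {n : ℕ} (x : Fin n → ℤ) : Matrix (Fin 2) (Fin n) ℤ :=
  Matrix.of fun i j => if i = 0 then x j else 0

/-- generic enlargement, in block form. -/
def enlargeG (n : ℕ) (V : Matrix (Fin n) (Fin n) ℤ) (x y : Fin n → ℤ)
    (D : Matrix (Fin 2) (Fin 2) ℤ) : Matrix (Fin (n + 2)) (Fin (n + 2)) ℤ :=
  (fromBlocks V (colY y) (rowX x) D).submatrix
    (finSumFinEquiv (m := n) (n := 2)).symm (finSumFinEquiv (m := n) (n := 2)).symm

lemma enlargeA_eq_G (n : ℕ) (V : Matrix (Fin n) (Fin n) ℤ) (x y : Fin n → ℤ) (z : ℤ) :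
    enlargeA n V x y z = enlargeG n V x y (genl true z) := by
  ext i j
  rw [enlargeG, submatrix_apply]
  obtain ⟨p, rfl⟩ := finSumFinEquiv.surjective i
  obtain ⟨q, rfl⟩ := finSumFinEquiv.surjective j
  rw [Equiv.symm_apply_apply, Equiv.symm_apply_apply]
  rcases p with p | p <;> rcases q with q | q <;>
    simp only [finSumFinEquiv_apply_left, finSumFinEquiv_apply_right, enlargeA, genl,
      fromBlocks_apply₁₁, fromBlocks_apply₁₂, fromBlocks_apply₂₁, fromBlocks_apply₂₂,
      of_apply, Fin.coe_castAdd, Fin.coe_natAdd, colY, rowX, if_true]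
  · rw [dif_pos p.isLt, dif_pos q.isLt]
  · rw [dif_pos p.isLt]
    have : ¬ ((n + (q : ℕ)) < n) := by omega
    rw [dif_neg this]
    fin_cases q <;> simp
  · have : ¬ ((n + (p : ℕ)) < n) := by omega
    rw [dif_neg this]
    fin_cases p <;> simp [q.isLt]
  · have hp : ¬ ((n + (p : ℕ)) < n) := by omega
    have hq : ¬ ((n + (q : ℕ)) < n) := by omega
    rw [dif_neg hp]
    fin_cases p <;> fin_cases q <;> simp

lemma enlargeB_eq_G (n : ℕ) (V : Matrix (Fin n) (Fin n) ℤ) (x y : Fin n → ℤ) (z : ℤ) :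
    enlargeB n V x y z = enlargeG n V x y (genl false z) := by
  ext i j
  rw [enlargeG, submatrix_apply]
  obtain ⟨p, rfl⟩ := finSumFinEquiv.surjective i
  obtain ⟨q, rfl⟩ := finSumFinEquiv.surjective j
  rw [Equiv.symm_apply_apply, Equiv.symm_apply_apply]
  rcases p with p | p <;> rcases q with q | q <;>
    simp only [finSumFinEquiv_apply_left, finSumFinEquiv_apply_right, enlargeB, genl,
      fromBlocks_apply₁₁, fromBlocks_apply₁₂, fromBlocks_apply₂₁, fromBlocks_apply₂₂,
      of_apply, Fin.coe_castAdd, Fin.coe_natAdd, colY, rowX, if_false]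
  · rw [dif_pos p.isLt, dif_pos q.isLt]
  · rw [dif_pos p.isLt]
    have : ¬ ((n + (q : ℕ)) < n) := by omega
    rw [dif_neg this]
    fin_cases q <;> simp
  · have : ¬ ((n + (p : ℕ)) < n) := by omega
    rw [dif_neg this]
    fin_cases p <;> simp [q.isLt, Nat.ne_of_lt q.isLt]
  · have hp : ¬ ((n + (p : ℕ)) < n) := by omega
    have hq : ¬ ((n + (q : ℕ)) < n) := by omega
    rw [dif_neg hp]
    fin_cases p <;> fin_cases q <;> simp

lemma mul_colY {n : ℕ} (P : Matrix (Fin n) (Fin n) ℤ) (y : Fin n → ℤ) :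
    Pᵀ * colY y = colY (Pᵀ *ᵥ y) := by
  ext i j
  by_cases hj : j = 0 <;>
    simp [colY, mul_apply, mulVec, dotProduct, hj, Finset.sum_ite_eq, mul_comm]

lemma rowX_mul {n : ℕ} (P : Matrix (Fin n) (Fin n) ℤ) (x : Fin n → ℤ) :
    rowX x * P = rowX (vecMul x P) := by
  ext i j
  by_cases hi : i = 0 <;>
    simp [rowX, mul_apply, vecMul, dotProduct, hi]

/-- extend a congruence matrix by the 2×2 identity. -/
def extendP {n : ℕ} (P : Matrix (Fin n) (Fin n) ℤ) :
    Matrix (Fin (n + 2)) (Fin (n + 2)) ℤ :=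
  (fromBlocks P 0 0 (1 : Matrix (Fin 2) (Fin 2) ℤ)).submatrix
    (finSumFinEquiv (m := n) (n := 2)).symm (finSumFinEquiv (m := n) (n := 2)).symm

lemma det_extendP {n : ℕ} (P : Matrix (Fin n) (Fin n) ℤ) :
    (extendP P).det = P.det := by
  rw [extendP]
  rw [show ((finSumFinEquiv (m := n) (n := 2)).symm : Fin (n+2) → Fin n ⊕ Fin 2)
    = ⇑(finSumFinEquiv (m := n) (n := 2)).symm from rfl]
  rw [det_submatrix_equiv_self, det_fromBlocks_zero₂₁, det_one, mul_one]

lemma congr_enlargeG {n : ℕ} (P V : Matrix (Fin n) (Fin n) ℤ) (x y : Fin n → ℤ)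
    (D : Matrix (Fin 2) (Fin 2) ℤ) :
    (extendP P)ᵀ * enlargeG n V x y D * extendP P
      = enlargeG n (Pᵀ * V * P) (vecMul x P) (Pᵀ *ᵥ y) D := by
  rw [extendP, enlargeG, transpose_submatrix, submatrix_mul_equiv, submatrix_mul_equiv,
    fromBlocks_transpose, fromBlocks_multiply, fromBlocks_multiply, enlargeG]
  simp only [transpose_zero, transpose_one, Matrix.zero_mul, Matrix.mul_zero,
    Matrix.one_mul, Matrix.mul_one, add_zero, zero_add, Matrix.mul_assoc,
    mul_colY, rowX_mul]

/-- `A` has block form `(I *; 0 *)` with `I` the upper-left `r × r` identity. -/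
def BlockFix (r : ℕ) {n : ℕ} (A : Matrix (Fin n) (Fin n) ℤ) : Prop :=
  (∀ i j : Fin n, (i : ℕ) < r → (j : ℕ) < r →
    A i j = if (i : ℕ) = (j : ℕ) then 1 else 0) ∧
  (∀ i j : Fin n, ¬ (i : ℕ) < r → (j : ℕ) < r → A i j = 0)

/- ### BlockFix lemmas -/

lemma BlockFix.col {r n : ℕ} {P : Matrix (Fin n) (Fin n) ℤ} (h : BlockFix r P)
    (i j : Fin n) (hj : (j : ℕ) < r) : P i j = if (i : ℕ) = (j : ℕ) then 1 else 0 := by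
  by_cases hi : (i : ℕ) < r
  · exact h.1 i j hi hj
  · rw [h.2 i j hi hj, if_neg]; omega

lemma vecMul_blockFix {r n : ℕ} {P : Matrix (Fin n) (Fin n) ℤ} (h : BlockFix r P)
    (x : Fin n → ℤ) (j : Fin n) (hj : (j : ℕ) < r) : vecMul x P j = x j := by
  have key : ∀ k, P k j = if k = j then 1 else 0 := by
    intro k; rw [h.col k j hj]
    by_cases hk : k = j
    · simp [hk]
    · rw [if_neg hk, if_neg (by simpa [Fin.ext_iff] using hk)]
  simp [vecMul, dotProduct, key]

lemma mulVec_blockFix {r n : ℕ} {P : Matrix (Fin n) (Fin n) ℤ} (h : BlockFix r P)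
    (y : Fin n → ℤ) (j : Fin n) (hj : (j : ℕ) < r) : (Pᵀ *ᵥ y) j = y j := by
  have key : ∀ k, P k j = if j = k then 1 else 0 := by
    intro k; rw [h.col k j hj]
    by_cases hk : j = k
    · simp [hk]
    · rw [if_neg hk, if_neg (by simpa [Fin.ext_iff, eq_comm] using hk)]
  simp [mulVec, dotProduct, key]

lemma blockFix_extendP {r n : ℕ} {P : Matrix (Fin n) (Fin n) ℤ} (h : BlockFix r P) :
    BlockFix r (extendP P) := by
  have key : ∀ i j : Fin (n + 2), (j : ℕ) < r →
      extendP P i j = if (i : ℕ) = (j : ℕ) then 1 else 0 := by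
    intro i j hj
    rw [extendP, submatrix_apply]
    obtain ⟨p, rfl⟩ := finSumFinEquiv.surjective i
    obtain ⟨q, rfl⟩ := finSumFinEquiv.surjective j
    rw [Equiv.symm_apply_apply, Equiv.symm_apply_apply]
    rcases p with p | p <;> rcases q with q | q <;>
      simp only [finSumFinEquiv_apply_left, finSumFinEquiv_apply_right,
        fromBlocks_apply₁₁, fromBlocks_apply₁₂, fromBlocks_apply₂₁, fromBlocks_apply₂₂,
        Fin.coe_castAdd, Fin.coe_natAdd] at *
    · exact h.col p q hj
    · have := p.isLt; exact (if_neg (by omega)).symm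
    · have := q.isLt; exact (if_neg (by omega)).symm
    · by_cases hpq : p = q
      · subst hpq; simp [Matrix.one_apply]
      · rw [Matrix.one_apply_ne hpq]; exact (if_neg (by
          simpa [Fin.ext_iff] using hpq)).symm
  constructor
  · intro i j _ hj; exact key i j hj
  · intro i j hi hj; rw [key i j hj, if_neg (by omega)]

/- ### permutation congruences -/

def permP {m : ℕ} (π : Equiv.Perm (Fin m)) : Matrix (Fin m) (Fin m) ℤ :=
  Matrix.of fun i j => if π j = i then 1 else 0

lemma permP_eq {m : ℕ} (π : Equiv.Perm (Fin m)) :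
    permP π = (π⁻¹ : Equiv.Perm (Fin m)).permMatrix ℤ := by
  ext i j
  simp only [permP, of_apply, Equiv.Perm.permMatrix, PEquiv.toMatrix_apply,
    Equiv.toPEquiv_apply, Option.mem_def, Option.some.injEq]
  refine if_congr ?_ rfl rfl
  exact ⟨fun hh => by simp [← hh], fun hh => by simp [← hh]⟩

lemma det_permP {m : ℕ} (π : Equiv.Perm (Fin m)) :
    (permP π).det = 1 ∨ (permP π).det = -1 := by
  rw [permP_eq, Matrix.det_permutation]
  rcases Int.units_eq_one_or (Equiv.Perm.sign π⁻¹) with h | h <;> rw [h] <;> simp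

lemma congr_permP {m : ℕ} (π : Equiv.Perm (Fin m)) (M : Matrix (Fin m) (Fin m) ℤ) :
    (permP π)ᵀ * M * permP π = M.submatrix π π := by
  ext i j
  simp [mul_apply, permP, transpose_apply, Finset.sum_ite_eq, Finset.sum_ite_eq',
    mul_ite, ite_mul, mul_comm]

lemma blockFix_permP {r m : ℕ} {π : Equiv.Perm (Fin m)}
    (hfix : ∀ i : Fin m, (i : ℕ) < r → π i = i) : BlockFix r (permP π) := by
  have key : ∀ i j : Fin m, (j : ℕ) < r →
      permP π i j = if (i : ℕ) = (j : ℕ) then 1 else 0 := by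
    intro i j hj
    rw [permP, of_apply, hfix j hj]
    by_cases hij : j = i
    · subst hij; simp
    · rw [if_neg hij, if_neg (by simpa [Fin.ext_iff, eq_comm] using hij)]
  constructor
  · intro i j _ hj; exact key i j hj
  · intro i j hi hj; rw [key i j hj, if_neg (by omega)]

/- ### the swap of two enlargements -/

def ext0 {n : ℕ} (v : Fin n → ℤ) : Fin (n + 2) → ℤ :=
  fun i => if h : (i : ℕ) < n then v ⟨i, h⟩ else 0

def swE (n : ℕ) : ((Fin n ⊕ Fin 2) ⊕ Fin 2) ≃ ((Fin n ⊕ Fin 2) ⊕ Fin 2) :=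
  ((Equiv.sumAssoc (Fin n) (Fin 2) (Fin 2)).trans
    ((Equiv.refl (Fin n)).sumCongr (Equiv.sumComm (Fin 2) (Fin 2)))).trans
    (Equiv.sumAssoc (Fin n) (Fin 2) (Fin 2)).symm

def FE (n : ℕ) : ((Fin n ⊕ Fin 2) ⊕ Fin 2) ≃ Fin (n + 2 + 2) :=
  (Equiv.sumCongr (finSumFinEquiv (m := n) (n := 2)) (Equiv.refl (Fin 2))).trans
    (finSumFinEquiv (m := n + 2) (n := 2))

def swPerm (n : ℕ) : Equiv.Perm (Fin (n + 2 + 2)) :=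
  ((FE n).symm.trans (swE n)).trans (FE n)

def colYS {n : ℕ} (y' : Fin n → ℤ) : Matrix (Fin n ⊕ Fin 2) (Fin 2) ℤ :=
  Matrix.of fun p j => Sum.elim (fun i => if j = 0 then y' i else 0) (fun _ => 0) p

def rowXS {n : ℕ} (x' : Fin n → ℤ) : Matrix (Fin 2) (Fin n ⊕ Fin 2) ℤ :=
  Matrix.of fun i p => Sum.elim (fun j => if i = 0 then x' j else 0) (fun _ => 0) p

def bigM (n : ℕ) (V : Matrix (Fin n) (Fin n) ℤ) (x y : Fin n → ℤ)
    (D : Matrix (Fin 2) (Fin 2) ℤ) (x' y' : Fin n → ℤ) (D' : Matrix (Fin 2) (Fin 2) ℤ) :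
    Matrix ((Fin n ⊕ Fin 2) ⊕ Fin 2) ((Fin n ⊕ Fin 2) ⊕ Fin 2) ℤ :=
  fromBlocks (fromBlocks V (colY y) (rowX x) D) (colYS y') (rowXS x') D'

lemma nest (n : ℕ) (V : Matrix (Fin n) (Fin n) ℤ) (x y : Fin n → ℤ)
    (D : Matrix (Fin 2) (Fin 2) ℤ) (x' y' : Fin n → ℤ) (D' : Matrix (Fin 2) (Fin 2) ℤ) :
    enlargeG (n + 2) (enlargeG n V x y D) (ext0 x') (ext0 y') D'
      = (bigM n V x y D x' y' D').submatrix (FE n).symm (FE n).symm := by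
  rw [enlargeG]
  have h1 : fromBlocks (enlargeG n V x y D) (colY (ext0 y')) (rowX (ext0 x')) D'
      = (bigM n V x y D x' y' D').submatrix
        (Sum.map (finSumFinEquiv (m := n) (n := 2)).symm id)
        (Sum.map (finSumFinEquiv (m := n) (n := 2)).symm id) := by
    ext p q
    rcases p with p | p <;> rcases q with q | q
    · rfl
    · simp only [fromBlocks_apply₁₂, submatrix_apply, Sum.map_inl, Sum.map_inr, id_eq]
      obtain ⟨a, rfl⟩ := finSumFinEquiv.surjective p
      rw [Equiv.symm_apply_apply]
      rcases a with a | a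
      · simp [colY, colYS, bigM, ext0, finSumFinEquiv_apply_left, a.isLt]
      · have : ¬ (((finSumFinEquiv (m := n) (n := 2)) (Sum.inr a) : ℕ) < n) := by
          simp [finSumFinEquiv_apply_right]
        simp [colY, colYS, bigM, ext0, this]
    · simp only [fromBlocks_apply₂₁, submatrix_apply, Sum.map_inl, Sum.map_inr, id_eq]
      obtain ⟨a, rfl⟩ := finSumFinEquiv.surjective q
      rw [Equiv.symm_apply_apply]
      rcases a with a | a
      · simp [rowX, rowXS, bigM, ext0, finSumFinEquiv_apply_left, a.isLt]
      · have : ¬ (((finSumFinEquiv (m := n) (n := 2)) (Sum.inr a) : ℕ) < n) := by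
          simp [finSumFinEquiv_apply_right]
        simp [rowX, rowXS, bigM, ext0, this]
    · rfl
  rw [h1, submatrix_submatrix]
  rfl

lemma bigM_swap (n : ℕ) (V : Matrix (Fin n) (Fin n) ℤ) (x y : Fin n → ℤ)
    (D : Matrix (Fin 2) (Fin 2) ℤ) (x' y' : Fin n → ℤ) (D' : Matrix (Fin 2) (Fin 2) ℤ) :
    (bigM n V x y D x' y' D').submatrix (swE n) (swE n)
      = bigM n V x' y' D' x y D := by
  ext p q
  rcases p with (p | p) | p <;> rcases q with (q | q) | q <;> rfl

lemma swPerm_fix {n r : ℕ} (hr : r ≤ n) (i : Fin (n + 2 + 2)) (hi : (i : ℕ) < r) :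
    swPerm n i = i := by
  have hin : (i : ℕ) < n := lt_of_lt_of_le hi hr
  have hF : FE n (Sum.inl (Sum.inl ⟨(i : ℕ), hin⟩)) = i := by
    apply Fin.ext
    simp [FE, finSumFinEquiv_apply_left]
  have hsymm : (FE n).symm i = Sum.inl (Sum.inl ⟨(i : ℕ), hin⟩) :=
    (Equiv.symm_apply_eq _).mpr hF.symm
  show FE n (swE n ((FE n).symm i)) = i
  rw [hsymm]
  exact hF

lemma swap_enlargeG (n : ℕ) (V : Matrix (Fin n) (Fin n) ℤ) (x y : Fin n → ℤ)
    (D : Matrix (Fin 2) (Fin 2) ℤ) (x' y' : Fin n → ℤ) (D' : Matrix (Fin 2) (Fin 2) ℤ) :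
    (enlargeG (n + 2) (enlargeG n V x y D) (ext0 x') (ext0 y') D').submatrix
        (swPerm n) (swPerm n)
      = enlargeG (n + 2) (enlargeG n V x' y' D') (ext0 x) (ext0 y) D := by
  rw [nest, nest, submatrix_submatrix]
  have hcomp : (((FE n).symm : Fin (n+2+2) → (Fin n ⊕ Fin 2) ⊕ Fin 2) ∘ (swPerm n))
      = (swE n : _ → _) ∘ ((FE n).symm : Fin (n+2+2) → (Fin n ⊕ Fin 2) ⊕ Fin 2) := by
    funext i
    show (FE n).symm (swPerm n i) = swE n ((FE n).symm i)
    simp [swPerm]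
  rw [hcomp, ← submatrix_submatrix, bigM_swap]

/-- One step of Strong S-equivalence with block size `r = m - 1`: a strong congruence,
an enlargement with the first `r` entries of `x` and `y` equal, or such a reduction
which does not shrink the matrix below size `r`. -/
inductive StrongStep (r : ℕ) :
    (Σ n, Matrix (Fin n) (Fin n) ℤ) → (Σ n, Matrix (Fin n) (Fin n) ℤ) → Prop
  | congr {n} (V W P : Matrix (Fin n) (Fin n) ℤ) (hP : BlockFix r P)
      (hdet : P.det = 1 ∨ P.det = -1) (hW : W = Pᵀ * V * P) :
      StrongStep r ⟨n, V⟩ ⟨n, W⟩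
  | enlA {n} (V : Matrix (Fin n) (Fin n) ℤ) (x y : Fin n → ℤ) (z : ℤ)
      (hxy : ∀ i : Fin n, (i : ℕ) < r → x i = y i) :
      StrongStep r ⟨n, V⟩ ⟨n + 2, enlargeA n V x y z⟩
  | enlB {n} (V : Matrix (Fin n) (Fin n) ℤ) (x y : Fin n → ℤ) (z : ℤ)
      (hxy : ∀ i : Fin n, (i : ℕ) < r → x i = y i) :
      StrongStep r ⟨n, V⟩ ⟨n + 2, enlargeB n V x y z⟩
  | redA {n} (V : Matrix (Fin n) (Fin n) ℤ) (x y : Fin n → ℤ) (z : ℤ)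
      (hxy : ∀ i : Fin n, (i : ℕ) < r → x i = y i) (hn : r ≤ n) :
      StrongStep r ⟨n + 2, enlargeA n V x y z⟩ ⟨n, V⟩
  | redB {n} (V : Matrix (Fin n) (Fin n) ℤ) (x y : Fin n → ℤ) (z : ℤ)
      (hxy : ∀ i : Fin n, (i : ℕ) < r → x i = y i) (hn : r ≤ n) :
      StrongStep r ⟨n + 2, enlargeB n V x y z⟩ ⟨n, V⟩

/-- Strong S-equivalence of (ordered Seifert) matrices. -/
def StrongSEquiv (r : ℕ) :
    (Σ n, Matrix (Fin n) (Fin n) ℤ) → (Σ n, Matrix (Fin n) (Fin n) ℤ) → Prop :=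
  Relation.ReflTransGen (StrongStep r)

/-- An "upward" strong step: a strong congruence or a strong enlargement. -/
inductive UpStrong (r : ℕ) :
    (Σ n, Matrix (Fin n) (Fin n) ℤ) → (Σ n, Matrix (Fin n) (Fin n) ℤ) → Prop
  | congr {n} (V W P : Matrix (Fin n) (Fin n) ℤ) (hP : BlockFix r P)
      (hdet : P.det = 1 ∨ P.det = -1) (hW : W = Pᵀ * V * P) :
      UpStrong r ⟨n, V⟩ ⟨n, W⟩
  | enlA {n} (V : Matrix (Fin n) (Fin n) ℤ) (x y : Fin n → ℤ) (z : ℤ)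
      (hxy : ∀ i : Fin n, (i : ℕ) < r → x i = y i) :
      UpStrong r ⟨n, V⟩ ⟨n + 2, enlargeA n V x y z⟩
  | enlB {n} (V : Matrix (Fin n) (Fin n) ℤ) (x y : Fin n → ℤ) (z : ℤ)
      (hxy : ∀ i : Fin n, (i : ℕ) < r → x i = y i) :
      UpStrong r ⟨n, V⟩ ⟨n + 2, enlargeB n V x y z⟩

lemma up_enlG {r n : ℕ} (V : Matrix (Fin n) (Fin n) ℤ) (x y : Fin n → ℤ) (b : Bool)
    (z : ℤ) (hxy : ∀ i : Fin n, (i : ℕ) < r → x i = y i) :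
    UpStrong r ⟨n, V⟩ ⟨n + 2, enlargeG n V x y (genl b z)⟩ := by
  cases b
  · rw [← enlargeB_eq_G]; exact UpStrong.enlB V x y z hxy
  · rw [← enlargeA_eq_G]; exact UpStrong.enlA V x y z hxy

lemma ext0_agree {r n : ℕ} (hrn : r ≤ n) {x y : Fin n → ℤ}
    (hxy : ∀ i : Fin n, (i : ℕ) < r → x i = y i) :
    ∀ i : Fin (n + 2), (i : ℕ) < r → ext0 x i = ext0 y i := by
  intro i hi
  have hin : (i : ℕ) < n := lt_of_lt_of_le hi hrn
  simp only [ext0, dif_pos hin]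
  exact hxy ⟨i, hin⟩ hi

lemma strip {r : ℕ} {c N : Σ n, Matrix (Fin n) (Fin n) ℤ}
    (h : Relation.ReflTransGen (UpStrong r) c N) :
    ∀ (n : ℕ) (V : Matrix (Fin n) (Fin n) ℤ) (x y : Fin n → ℤ) (b : Bool) (z : ℤ),
      c = ⟨n, V⟩ → (∀ i : Fin n, (i : ℕ) < r → x i = y i) → r ≤ n →
      ∃ N', Relation.ReflTransGen (UpStrong r) ⟨n + 2, enlargeG n V x y (genl b z)⟩ N'
        ∧ Relation.ReflTransGen (UpStrong r) N N' := by
  induction h using Relation.ReflTransGen.head_induction_on with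
  | refl =>
    intro n V x y b z hc hxy hrn
    exact ⟨⟨n + 2, enlargeG n V x y (genl b z)⟩, .refl,
      by rw [hc]; exact .single (up_enlG V x y b z hxy)⟩
  | head hstep hrest ih =>
    intro n V x y b z hc hxy hrn
    subst hc
    cases hstep with
    | congr _ W P hP hdet hW =>
      subst hW
      obtain ⟨N', h1, h2⟩ := ih n (Pᵀ * V * P) (vecMul x P) (Pᵀ *ᵥ y) b z rfl
        (fun j hj => by
          rw [vecMul_blockFix hP x j hj, mulVec_blockFix hP y j hj, hxy j hj]) hrn
      refine ⟨N', .head ?_ h1, h2⟩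
      exact UpStrong.congr _ _ (extendP P) (blockFix_extendP hP)
        (by rw [det_extendP]; exact hdet) (congr_enlargeG P V x y (genl b z)).symm
    | enlA _ x' y' z' hxy' =>
      obtain ⟨N', h1, h2⟩ := ih (n + 2) (enlargeG n V x' y' (genl true z'))
        (ext0 x) (ext0 y) b z (by rw [enlargeA_eq_G]) (ext0_agree hrn hxy)
        (le_trans hrn (by omega))
      refine ⟨N', ?_, h2⟩
      have s1 : UpStrong r ⟨n + 2, enlargeG n V x y (genl b z)⟩
          ⟨n + 2 + 2, enlargeG (n + 2) (enlargeG n V x y (genl b z))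
            (ext0 x') (ext0 y') (genl true z')⟩ :=
        up_enlG _ _ _ _ _ (ext0_agree hrn hxy')
      have s2 : UpStrong r ⟨n + 2 + 2, enlargeG (n + 2) (enlargeG n V x y (genl b z))
            (ext0 x') (ext0 y') (genl true z')⟩
          ⟨n + 2 + 2, enlargeG (n + 2) (enlargeG n V x' y' (genl true z'))
            (ext0 x) (ext0 y) (genl b z)⟩ := by
        refine UpStrong.congr _ _ (permP (swPerm n))
          (blockFix_permP (fun i hi => swPerm_fix hrn i hi)) (det_permP _) ?_
        rw [congr_permP, swap_enlargeG]
      exact .head s1 (.head s2 h1)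
    | enlB _ x' y' z' hxy' =>
      obtain ⟨N', h1, h2⟩ := ih (n + 2) (enlargeG n V x' y' (genl false z'))
        (ext0 x) (ext0 y) b z (by rw [enlargeB_eq_G]) (ext0_agree hrn hxy)
        (le_trans hrn (by omega))
      refine ⟨N', ?_, h2⟩
      have s1 : UpStrong r ⟨n + 2, enlargeG n V x y (genl b z)⟩
          ⟨n + 2 + 2, enlargeG (n + 2) (enlargeG n V x y (genl b z))
            (ext0 x') (ext0 y') (genl false z')⟩ :=
        up_enlG _ _ _ _ _ (ext0_agree hrn hxy')
      have s2 : UpStrong r ⟨n + 2 + 2, enlargeG (n + 2) (enlargeG n V x y (genl b z))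
            (ext0 x') (ext0 y') (genl false z')⟩
          ⟨n + 2 + 2, enlargeG (n + 2) (enlargeG n V x' y' (genl false z'))
            (ext0 x) (ext0 y) (genl b z)⟩ := by
        refine UpStrong.congr _ _ (permP (swPerm n))
          (blockFix_permP (fun i hi => swPerm_fix hrn i hi)) (det_permP _) ?_
        rw [congr_permP, swap_enlargeG]
      exact .head s1 (.head s2 h1)


/-- Two Strongly S-equivalent matrices have a common stabilization: a matrix `N`
obtained from each of them by a sequence of enlargements and congruences only. -/
theorem stmt8 (r : ℕ) (M M' : Σ n, Matrix (Fin n) (Fin n) ℤ)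
    (h : StrongSEquiv r M M') :
    ∃ N, Relation.ReflTransGen (UpStrong r) M N ∧
      Relation.ReflTransGen (UpStrong r) M' N := by
  induction h using Relation.ReflTransGen.head_induction_on with
  | refl => exact ⟨M', .refl, .refl⟩
  | head hstep hrest ih =>
    obtain ⟨N, hN1, hN2⟩ := ih
    cases hstep with
    | congr V W P hP hdet hW =>
      exact ⟨N, .head (UpStrong.congr V W P hP hdet hW) hN1, hN2⟩
    | enlA V x y z hxy => exact ⟨N, .head (UpStrong.enlA V x y z hxy) hN1, hN2⟩
    | enlB V x y z hxy => exact ⟨N, .head (UpStrong.enlB V x y z hxy) hN1, hN2⟩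
    | @redA n V x y z hxy hn =>
      obtain ⟨N', h1, h2⟩ := strip hN1 n V x y true z rfl hxy hn
      refine ⟨N', ?_, hN2.trans h2⟩
      rw [enlargeA_eq_G]; exact h1
    | @redB n V x y z hxy hn =>
      obtain ⟨N', h1, h2⟩ := strip hN1 n V x y false z rfl hxy hn
      refine ⟨N', ?_, hN2.trans h2⟩
      rw [enlargeB_eq_G]; exact h1
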